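/- Let a : (0,∞) → [0,∞) be measurable and essentially bounded on (0,1], let b be a daughter distribution function, and suppose there are l ≥ 0 and b₀ > 0 with n₀(x) ≤ b₀(1+x^l) for a.e. x > 0. Let i ≥ max{1, l}. Then for every measurable f : (0,∞) → [0,∞) with ∫₀^∞ a(y)(1+y^i) f(y) dy < ∞, one has ∫₀^∞ (Ff)(x) dx = ∫₀^∞ (n₀(y) − 1) a(y) f(y) dy ≤ a₁ ∫₀^1 f(y) dy + 2b₀ ∫₁^∞ a(y)(1+y^i) f(y) dy, where a₁ = 2b₀ · ess sup_{0<y≤1} a(y)(1+y^i). -/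

import Mathlib

open MeasureTheory Set Filter
open scoped ENNReal

/-- `n_m(y) = ∫₀^y x^m b(x,y) dx`. -/
noncomputable def nmom (b : ℝ → ℝ → ℝ) (m y : ℝ) : ℝ :=
  ∫ x in Set.Ioo 0 y, x ^ m * b x y

/-- `n_m(y)` as a value in `[0,∞]`. -/
noncomputable def nL (b : ℝ → ℝ → ℝ) (m y : ℝ) : ℝ≥0∞ :=
  ∫⁻ x in Set.Ioo 0 y, ENNReal.ofReal (x ^ m * b x y)

/-- The fragmentation operator `(Ff)(x) = −a(x) f(x) + ∫ₓ^∞ a(y) b(x,y) f(y) dy`. -/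
noncomputable def fragOp (a : ℝ → ℝ) (b : ℝ → ℝ → ℝ) (f : ℝ → ℝ) (x : ℝ) : ℝ :=
  -(a x * f x) + ∫ y in Set.Ioi x, a y * b x y * f y

/-- the zeroth moment estimate for the fragmentation operator:
`∫₀^∞ (Ff)(x) dx = ∫₀^∞ (n₀(y)−1) a(y) f(y) dy
  ≤ a₁ ∫₀^1 f(y) dy + 2b₀ ∫₁^∞ a(y)(1+y^i) f(y) dy`, with
`a₁ = 2b₀ · ess sup_{0<y≤1} a(y)(1+y^i)`. -/
theorem stmt18 (a : ℝ → ℝ) (b : ℝ → ℝ → ℝ) (l b₀ i : ℝ) (f : ℝ → ℝ)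
    (ha_meas : Measurable a) (ha_nonneg : ∀ x, 0 ≤ a x)
    (ha_bdd : Filter.IsBoundedUnder (· ≤ ·)
      (MeasureTheory.ae (volume.restrict (Set.Ioc (0:ℝ) 1))) a)
    (hb_meas : Measurable (Function.uncurry b))
    (hb_nonneg : ∀ x y, 0 ≤ b x y)
    (hb_supp : ∀ y : ℝ, 0 < y → ∀ᵐ x ∂(volume : Measure ℝ), y < x → b x y = 0)
    (hb_mass : ∀ y : ℝ, 0 < y → ∫ x in Set.Ioo 0 y, x * b x y = y)
    (hl : 0 ≤ l) (hb₀ : 0 < b₀)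
    (hn0 : ∀ᵐ x ∂(volume.restrict (Set.Ioi (0:ℝ))),
      nL b 0 x ≤ ENNReal.ofReal (b₀ * (1 + x ^ l)))
    (hi : max 1 l ≤ i)
    (hf_meas : Measurable f) (hf_nonneg : ∀ x, 0 ≤ f x)
    (hf_int : ∫⁻ y in Set.Ioi (0:ℝ), ENNReal.ofReal (a y * (1 + y ^ i) * f y) < ∞) :
    (∫ x in Set.Ioi (0:ℝ), fragOp a b f x
        = ∫ y in Set.Ioi (0:ℝ), (nmom b 0 y - 1) * a y * f y) ∧
    (∫⁻ y in Set.Ioi (0:ℝ), ENNReal.ofReal ((nmom b 0 y - 1) * a y * f y))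
      ≤ ENNReal.ofReal (2 * b₀ *
            essSup (fun y => a y * (1 + y ^ i)) (volume.restrict (Set.Ioc (0:ℝ) 1))) *
          (∫⁻ y in Set.Ioc (0:ℝ) 1, ENNReal.ofReal (f y)) +
        ENNReal.ofReal (2 * b₀) *
          ∫⁻ y in Set.Ioi (1:ℝ), ENNReal.ofReal (a y * (1 + y ^ i) * f y) := by
  
  have hi1 : (1:ℝ) ≤ i := le_trans (le_max_left 1 l) hi
  have hli : l ≤ i := le_trans (le_max_right 1 l) hi
  have hi0 : (0:ℝ) ≤ i := le_trans zero_le_one hi1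
  have hbxy : Measurable fun p : ℝ × ℝ => b p.1 p.2 := hb_meas
  have hby : ∀ y : ℝ, Measurable fun x => b x y := fun y =>
    hbxy.comp (measurable_id.prodMk measurable_const)
  have hbx : ∀ x : ℝ, Measurable fun y => b x y := fun x =>
    hbxy.comp (measurable_const.prodMk measurable_id)
  -- nL measurability
  have hnL_meas : Measurable fun y => nL b 0 y := by
    have hPmeas : Measurable ({p : ℝ × ℝ | 0 < p.2 ∧ p.2 < p.1}.indicator
        (fun p : ℝ × ℝ => ENNReal.ofReal (b p.2 p.1))) := by
      refine Measurable.indicator ?_ ?_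
      · exact ENNReal.measurable_ofReal.comp (hbxy.comp (measurable_snd.prodMk measurable_fst))
      · exact MeasurableSet.inter (measurableSet_lt measurable_const measurable_snd)
          (measurableSet_lt measurable_snd measurable_fst)
    have h1 : ∀ y, nL b 0 y =
        ∫⁻ x, ({p : ℝ × ℝ | 0 < p.2 ∧ p.2 < p.1}.indicator
          (fun p : ℝ × ℝ => ENNReal.ofReal (b p.2 p.1))) (y, x) := by
      intro y
      rw [nL, ← lintegral_indicator measurableSet_Ioo]
      refine lintegral_congr fun x => ?_
      simp only [Set.indicator_apply, Set.mem_Ioo, Set.mem_setOf_eq, Real.rpow_zero, one_mul]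
    simp_rw [h1]
    exact Measurable.lintegral_prod_right' (ν := volume) hPmeas
  -- nmom = toReal nL
  have hnmom_toReal : ∀ y : ℝ, nmom b 0 y = (nL b 0 y).toReal := by
    intro y
    rw [nmom, nL]
    simp only [Real.rpow_zero, one_mul]
    exact integral_eq_lintegral_of_nonneg_ae (ae_of_all _ fun x => hb_nonneg x y)
      (hby y).aestronglyMeasurable
  have hnmom_nonneg : ∀ y : ℝ, 0 ≤ nmom b 0 y := fun y => by
    rw [hnmom_toReal]; exact ENNReal.toReal_nonneg
  -- the kernel
  set F : ℝ → ℝ → ℝ≥0∞ := fun x y =>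
    if x < y then ENNReal.ofReal (a y * b x y * f y) else 0 with hFdef
  have hF_meas : Measurable (Function.uncurry F) := by
    apply Measurable.ite (measurableSet_lt measurable_fst measurable_snd)
    · exact ENNReal.measurable_ofReal.comp
        (((ha_meas.comp measurable_snd).mul hbxy).mul (hf_meas.comp measurable_snd))
    · exact measurable_const
  -- pointwise identities
  have hA1 : ∀ x ∈ Set.Ioi (0:ℝ), ∫⁻ y in Set.Ioi (0:ℝ), F x y
      = ∫⁻ y in Set.Ioi x, ENNReal.ofReal (a y * b x y * f y) := by
    intro x hx
    have : ∀ y, F x y = (Set.Ioi x).indicator (fun y => ENNReal.ofReal (a y * b x y * f y)) y := by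
      intro y; simp only [hFdef, Set.indicator_apply, Set.mem_Ioi]
    simp_rw [this]
    rw [lintegral_indicator measurableSet_Ioi, Measure.restrict_restrict measurableSet_Ioi,
      Set.inter_eq_left.mpr (Set.Ioi_subset_Ioi (le_of_lt hx))]
  have hA2 : ∀ y ∈ Set.Ioi (0:ℝ), ∫⁻ x in Set.Ioi (0:ℝ), F x y
      = nL b 0 y * ENNReal.ofReal (a y * f y) := by
    intro y hy
    have h1 : ∀ x, F x y = (Set.Iio y).indicator
        (fun x => ENNReal.ofReal (a y * b x y * f y)) x := by
      intro x; simp only [hFdef, Set.indicator_apply, Set.mem_Iio]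
    simp_rw [h1]
    rw [lintegral_indicator measurableSet_Iio, Measure.restrict_restrict measurableSet_Iio,
      Set.inter_comm, Set.Ioi_inter_Iio]
    have h2 : ∀ x, ENNReal.ofReal (a y * b x y * f y)
        = ENNReal.ofReal (a y * f y) * ENNReal.ofReal (b x y) := by
      intro x
      rw [← ENNReal.ofReal_mul' (hb_nonneg x y)]
      ring_nf
    simp_rw [h2]
    rw [lintegral_const_mul' _ _ ENNReal.ofReal_ne_top, nL]
    simp only [Real.rpow_zero, one_mul]
    ring
  -- a.e. bound for nL * af
  have hpow2 : ∀ y : ℝ, 0 < y → 1 + y ^ l ≤ 2 * (1 + y ^ i) := by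
    intro y hy
    have h0i : (0:ℝ) ≤ y ^ i := Real.rpow_nonneg hy.le i
    rcases le_total y 1 with h | h
    · have : y ^ l ≤ 1 := Real.rpow_le_one hy.le h hl
      nlinarith
    · have : y ^ l ≤ y ^ i := Real.rpow_le_rpow_of_exponent_le h hli
      nlinarith
  have hbd2 : ∀ᵐ y ∂volume.restrict (Set.Ioi (0:ℝ)),
      nL b 0 y * ENNReal.ofReal (a y * f y)
        ≤ ENNReal.ofReal (2 * b₀) * ENNReal.ofReal (a y * (1 + y ^ i) * f y) := by
    filter_upwards [hn0, ae_restrict_mem measurableSet_Ioi] with y h1 hy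
    calc nL b 0 y * ENNReal.ofReal (a y * f y)
        ≤ ENNReal.ofReal (b₀ * (1 + y ^ l)) * ENNReal.ofReal (a y * f y) :=
          mul_le_mul_left h1 _
      _ = ENNReal.ofReal (b₀ * (1 + y ^ l) * (a y * f y)) :=
          (ENNReal.ofReal_mul' (mul_nonneg (ha_nonneg y) (hf_nonneg y))).symm
      _ ≤ ENNReal.ofReal (2 * b₀ * (a y * (1 + y ^ i) * f y)) := by
          apply ENNReal.ofReal_le_ofReal
          have h2 := hpow2 y hy
          have haf : 0 ≤ a y * f y := mul_nonneg (ha_nonneg y) (hf_nonneg y)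
          nlinarith [mul_le_mul_of_nonneg_right
            (mul_le_mul_of_nonneg_left h2 hb₀.le) haf]
      _ = ENNReal.ofReal (2 * b₀) * ENNReal.ofReal (a y * (1 + y ^ i) * f y) :=
          ENNReal.ofReal_mul (by positivity)
  -- finiteness of T
  have hT_fin : (∫⁻ y in Set.Ioi (0:ℝ), nL b 0 y * ENNReal.ofReal (a y * f y)) < ∞ := by
    calc (∫⁻ y in Set.Ioi (0:ℝ), nL b 0 y * ENNReal.ofReal (a y * f y))
        ≤ ∫⁻ y in Set.Ioi (0:ℝ),
            ENNReal.ofReal (2 * b₀) * ENNReal.ofReal (a y * (1 + y ^ i) * f y) :=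
          lintegral_mono_ae hbd2
      _ = ENNReal.ofReal (2 * b₀) *
            ∫⁻ y in Set.Ioi (0:ℝ), ENNReal.ofReal (a y * (1 + y ^ i) * f y) :=
          lintegral_const_mul' _ _ ENNReal.ofReal_ne_top
      _ < ∞ := ENNReal.mul_lt_top ENNReal.ofReal_lt_top hf_int
  -- Tonelli
  have hswap : (∫⁻ x in Set.Ioi (0:ℝ), ∫⁻ y in Set.Ioi (0:ℝ), F x y)
      = ∫⁻ y in Set.Ioi (0:ℝ), ∫⁻ x in Set.Ioi (0:ℝ), F x y :=
    lintegral_lintegral_swap hF_meas.aemeasurable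
  have hST : (∫⁻ x in Set.Ioi (0:ℝ), ∫⁻ y in Set.Ioi (0:ℝ), F x y)
      = ∫⁻ y in Set.Ioi (0:ℝ), nL b 0 y * ENNReal.ofReal (a y * f y) :=
    hswap.trans (setLIntegral_congr_fun measurableSet_Ioi hA2)
  have hS_fin : (∫⁻ x in Set.Ioi (0:ℝ), ∫⁻ y in Set.Ioi (0:ℝ), F x y) ≠ ∞ := by
    rw [hST]; exact hT_fin.ne
  have hinner_meas : Measurable fun x => ∫⁻ y in Set.Ioi (0:ℝ), F x y :=
    Measurable.lintegral_prod_right' hF_meas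
  have hae_fin : ∀ᵐ x ∂volume.restrict (Set.Ioi (0:ℝ)),
      (∫⁻ y in Set.Ioi (0:ℝ), F x y) < ∞ := ae_lt_top hinner_meas hS_fin
  -- a.e. identity for ofReal g
  have hG2 : ∀ᵐ x ∂volume.restrict (Set.Ioi (0:ℝ)),
      ENNReal.ofReal (∫ y in Set.Ioi x, a y * b x y * f y)
        = ∫⁻ y in Set.Ioi (0:ℝ), F x y := by
    filter_upwards [hae_fin, ae_restrict_mem measurableSet_Ioi] with x hfin hx
    rw [hA1 x hx] at hfin ⊢
    have hmeas : Measurable fun y => a y * b x y * f y :=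
      ((ha_meas.mul (hbx x)).mul hf_meas)
    have hnn : ∀ y, 0 ≤ a y * b x y * f y := fun y =>
      mul_nonneg (mul_nonneg (ha_nonneg y) (hb_nonneg x y)) (hf_nonneg y)
    have hint : Integrable (fun y => a y * b x y * f y) (volume.restrict (Set.Ioi x)) := by
      refine ⟨hmeas.aestronglyMeasurable, ?_⟩
      rw [hasFiniteIntegral_iff_ofReal (ae_of_all _ hnn)]
      exact hfin
    exact ofReal_integral_eq_lintegral_ofReal hint (ae_of_all _ hnn)
  -- measurability and integrability of g
  have hg_nonneg : ∀ x : ℝ, 0 ≤ ∫ y in Set.Ioi x, a y * b x y * f y := fun x =>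
    integral_nonneg fun y =>
      mul_nonneg (mul_nonneg (ha_nonneg y) (hb_nonneg x y)) (hf_nonneg y)
  have hg_meas : StronglyMeasurable fun x => ∫ y in Set.Ioi x, a y * b x y * f y := by
    have hKr : Measurable fun p : ℝ × ℝ =>
        if p.1 < p.2 then a p.2 * b p.1 p.2 * f p.2 else 0 :=
      Measurable.ite (measurableSet_lt measurable_fst measurable_snd)
        (((ha_meas.comp measurable_snd).mul hbxy).mul (hf_meas.comp measurable_snd))
        measurable_const
    have heq : (fun x => ∫ y in Set.Ioi x, a y * b x y * f y)
        = fun x => ∫ y, (fun p : ℝ × ℝ =>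
            if p.1 < p.2 then a p.2 * b p.1 p.2 * f p.2 else 0) (x, y) := by
      funext x
      rw [← integral_indicator measurableSet_Ioi]
      refine integral_congr_ae (ae_of_all _ fun y => ?_)
      simp only [Set.indicator_apply, Set.mem_Ioi]
    rw [heq]
    exact hKr.stronglyMeasurable.integral_prod_right'
  have hg_int : IntegrableOn (fun x => ∫ y in Set.Ioi x, a y * b x y * f y)
      (Set.Ioi (0:ℝ)) := by
    refine ⟨hg_meas.aestronglyMeasurable, ?_⟩
    rw [hasFiniteIntegral_iff_ofReal (ae_of_all _ hg_nonneg)]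
    rw [lintegral_congr_ae hG2]
    exact lt_of_le_of_ne le_top hS_fin
  -- integrability of af
  have haf_meas : Measurable fun x => a x * f x := ha_meas.mul hf_meas
  have haf_nonneg : ∀ x, 0 ≤ a x * f x := fun x => mul_nonneg (ha_nonneg x) (hf_nonneg x)
  have haf_int : IntegrableOn (fun x => a x * f x) (Set.Ioi (0:ℝ)) := by
    refine ⟨haf_meas.aestronglyMeasurable, ?_⟩
    rw [hasFiniteIntegral_iff_ofReal (ae_of_all _ haf_nonneg)]
    calc (∫⁻ x in Set.Ioi (0:ℝ), ENNReal.ofReal (a x * f x))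
        ≤ ∫⁻ x in Set.Ioi (0:ℝ), ENNReal.ofReal (a x * (1 + x ^ i) * f x) := by
          refine lintegral_mono_ae ?_
          filter_upwards [ae_restrict_mem measurableSet_Ioi] with x hx
          apply ENNReal.ofReal_le_ofReal
          have h0i : (0:ℝ) ≤ x ^ i := Real.rpow_nonneg (le_of_lt hx) i
          nlinarith [mul_nonneg (ha_nonneg x) (hf_nonneg x),
            mul_nonneg (mul_nonneg (ha_nonneg x) (hf_nonneg x)) h0i]
      _ < ∞ := hf_int
  -- a.e. identity for ofReal N
  have hnL_fin : ∀ᵐ y ∂volume.restrict (Set.Ioi (0:ℝ)), nL b 0 y < ∞ := by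
    filter_upwards [hn0] with y h
    exact lt_of_le_of_lt h ENNReal.ofReal_lt_top
  have hNeq : ∀ᵐ y ∂volume.restrict (Set.Ioi (0:ℝ)),
      ENNReal.ofReal (nmom b 0 y * (a y * f y))
        = nL b 0 y * ENNReal.ofReal (a y * f y) := by
    filter_upwards [hnL_fin] with y hfin
    rw [hnmom_toReal, ENNReal.ofReal_mul' (mul_nonneg (ha_nonneg y) (hf_nonneg y)),
      ENNReal.ofReal_toReal hfin.ne]
  have hN_meas : Measurable fun y => nmom b 0 y * (a y * f y) := by
    have : (fun y => nmom b 0 y * (a y * f y))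
        = fun y => (nL b 0 y).toReal * (a y * f y) := by
      funext y; rw [hnmom_toReal]
    rw [this]
    exact (ENNReal.measurable_toReal.comp hnL_meas).mul haf_meas
  have hN_nonneg : ∀ y, 0 ≤ nmom b 0 y * (a y * f y) := fun y =>
    mul_nonneg (hnmom_nonneg y) (haf_nonneg y)
  have hN_int : IntegrableOn (fun y => nmom b 0 y * (a y * f y)) (Set.Ioi (0:ℝ)) := by
    refine ⟨hN_meas.aestronglyMeasurable, ?_⟩
    rw [hasFiniteIntegral_iff_ofReal (ae_of_all _ hN_nonneg), lintegral_congr_ae hNeq]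
    exact hT_fin
  -- Part 1
  have part1 : ∫ x in Set.Ioi (0:ℝ), fragOp a b f x
      = ∫ y in Set.Ioi (0:ℝ), (nmom b 0 y - 1) * a y * f y := by
    have e1 : ∫ x in Set.Ioi (0:ℝ), fragOp a b f x
        = (∫ x in Set.Ioi (0:ℝ), (∫ y in Set.Ioi x, a y * b x y * f y))
          - ∫ x in Set.Ioi (0:ℝ), a x * f x := by
      rw [← integral_sub hg_int haf_int]
      refine integral_congr_ae (ae_of_all _ fun x => ?_)
      rw [fragOp, neg_add_eq_sub]
    have e2 : ∫ x in Set.Ioi (0:ℝ), (∫ y in Set.Ioi x, a y * b x y * f y)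
        = (∫⁻ y in Set.Ioi (0:ℝ), nL b 0 y * ENNReal.ofReal (a y * f y)).toReal := by
      rw [integral_eq_lintegral_of_nonneg_ae (ae_of_all _ hg_nonneg)
        hg_meas.aestronglyMeasurable, lintegral_congr_ae hG2, hST]
    have e3 : ∫ y in Set.Ioi (0:ℝ), nmom b 0 y * (a y * f y)
        = (∫⁻ y in Set.Ioi (0:ℝ), nL b 0 y * ENNReal.ofReal (a y * f y)).toReal := by
      rw [integral_eq_lintegral_of_nonneg_ae (ae_of_all _ hN_nonneg)
        hN_meas.aestronglyMeasurable, lintegral_congr_ae hNeq]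
    have e4 : ∫ y in Set.Ioi (0:ℝ), (nmom b 0 y - 1) * a y * f y
        = (∫ y in Set.Ioi (0:ℝ), nmom b 0 y * (a y * f y))
          - ∫ y in Set.Ioi (0:ℝ), a y * f y := by
      rw [← integral_sub hN_int haf_int]
      refine integral_congr_ae (ae_of_all _ fun y => ?_)
      ring
    rw [e1, e2, ← e3, e4]
  refine ⟨part1, ?_⟩
  -- Part 2
  set M := essSup (fun y => a y * (1 + y ^ i)) (volume.restrict (Set.Ioc (0:ℝ) 1)) with hMdef
  have hbdd2 : Filter.IsBoundedUnder (· ≤ ·)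
      (MeasureTheory.ae (volume.restrict (Set.Ioc (0:ℝ) 1)))
      (fun y => a y * (1 + y ^ i)) := by
    obtain ⟨C, hC⟩ := ha_bdd
    rw [Filter.eventually_map] at hC
    refine ⟨2 * C, ?_⟩
    rw [Filter.eventually_map]
    filter_upwards [hC, ae_restrict_mem measurableSet_Ioc] with y h1 hy
    have hyi : y ^ i ≤ 1 := Real.rpow_le_one hy.1.le hy.2 hi0
    have h0i : (0:ℝ) ≤ y ^ i := Real.rpow_nonneg hy.1.le i
    nlinarith [ha_nonneg y]
  have hM_ae : ∀ᵐ y ∂volume.restrict (Set.Ioc (0:ℝ) 1), a y * (1 + y ^ i) ≤ M :=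
    ae_le_essSup hbdd2
  have hn0' : ∀ᵐ y ∂volume.restrict (Set.Ioc (0:ℝ) 1),
      nL b 0 y ≤ ENNReal.ofReal (b₀ * (1 + y ^ l)) :=
    ae_mono (Measure.restrict_mono Set.Ioc_subset_Ioi_self le_rfl) hn0
  have hn0'' : ∀ᵐ y ∂volume.restrict (Set.Ioi (1:ℝ)),
      nL b 0 y ≤ ENNReal.ofReal (b₀ * (1 + y ^ l)) :=
    ae_mono (Measure.restrict_mono (Set.Ioi_subset_Ioi zero_le_one) le_rfl) hn0
  have hnmom_le : ∀ y : ℝ, nL b 0 y ≤ ENNReal.ofReal (b₀ * (1 + y ^ l)) → 0 < y →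
      nmom b 0 y ≤ b₀ * (1 + y ^ l) := by
    intro y h hy
    rw [hnmom_toReal]
    exact ENNReal.toReal_le_of_le_ofReal
      (mul_nonneg hb₀.le (by nlinarith [Real.rpow_nonneg hy.le l])) h
  have hbound1 : ∀ᵐ y ∂volume.restrict (Set.Ioc (0:ℝ) 1),
      ENNReal.ofReal ((nmom b 0 y - 1) * a y * f y)
        ≤ ENNReal.ofReal (2 * b₀ * M) * ENNReal.ofReal (f y) := by
    filter_upwards [hn0', hM_ae, ae_restrict_mem measurableSet_Ioc] with y h1 h2 hy
    rw [← ENNReal.ofReal_mul' (hf_nonneg y)]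
    apply ENNReal.ofReal_le_ofReal
    have hy0 : (0:ℝ) < y := hy.1
    have hnm := hnmom_le y h1 hy0
    have hyl : y ^ l ≤ 1 := Real.rpow_le_one hy0.le hy.2 hl
    have hnm2 : nmom b 0 y ≤ 2 * b₀ := by nlinarith
    have h0i : (0:ℝ) ≤ y ^ i := Real.rpow_nonneg hy0.le i
    have haM : a y ≤ M := by nlinarith [ha_nonneg y]
    have hM0 : 0 ≤ M := le_trans (mul_nonneg (ha_nonneg y) (by nlinarith)) h2
    nlinarith [hnmom_nonneg y, ha_nonneg y, hf_nonneg y,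
      mul_le_mul hnm2 haM (ha_nonneg y) (by positivity : (0:ℝ) ≤ 2 * b₀),
      mul_nonneg (ha_nonneg y) (hf_nonneg y)]
  have hbound2 : ∀ᵐ y ∂volume.restrict (Set.Ioi (1:ℝ)),
      ENNReal.ofReal ((nmom b 0 y - 1) * a y * f y)
        ≤ ENNReal.ofReal (2 * b₀) * ENNReal.ofReal (a y * (1 + y ^ i) * f y) := by
    filter_upwards [hn0'', ae_restrict_mem measurableSet_Ioi] with y h1 hy
    rw [← ENNReal.ofReal_mul (by positivity : (0:ℝ) ≤ 2 * b₀)]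
    apply ENNReal.ofReal_le_ofReal
    have hy0 : (0:ℝ) < y := lt_trans zero_lt_one hy
    have hnm := hnmom_le y h1 hy0
    have hyl : y ^ l ≤ y ^ i := Real.rpow_le_rpow_of_exponent_le hy.le hli
    have h0i : (0:ℝ) ≤ y ^ i := Real.rpow_nonneg hy0.le i
    have hnm2 : nmom b 0 y ≤ b₀ * (1 + y ^ i) := by nlinarith
    nlinarith [hnmom_nonneg y, ha_nonneg y, hf_nonneg y,
      mul_nonneg (ha_nonneg y) (hf_nonneg y),
      mul_le_mul_of_nonneg_right hnm2
        (mul_nonneg (ha_nonneg y) (hf_nonneg y)),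
      mul_nonneg (mul_nonneg hb₀.le (mul_nonneg (ha_nonneg y) (hf_nonneg y)))
        (add_nonneg zero_le_one h0i)]
  have hsplit : (∫⁻ y in Set.Ioi (0:ℝ), ENNReal.ofReal ((nmom b 0 y - 1) * a y * f y))
      = (∫⁻ y in Set.Ioc (0:ℝ) 1, ENNReal.ofReal ((nmom b 0 y - 1) * a y * f y))
        + ∫⁻ y in Set.Ioi (1:ℝ), ENNReal.ofReal ((nmom b 0 y - 1) * a y * f y) := by
    rw [← Set.Ioc_union_Ioi_eq_Ioi (zero_le_one : (0:ℝ) ≤ 1),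
      lintegral_union measurableSet_Ioi]
    exact Set.Ioc_disjoint_Ioi le_rfl
  rw [hsplit]
  refine add_le_add ?_ ?_
  · calc (∫⁻ y in Set.Ioc (0:ℝ) 1, ENNReal.ofReal ((nmom b 0 y - 1) * a y * f y))
        ≤ ∫⁻ y in Set.Ioc (0:ℝ) 1, ENNReal.ofReal (2 * b₀ * M) * ENNReal.ofReal (f y) :=
          lintegral_mono_ae hbound1
      _ = ENNReal.ofReal (2 * b₀ * M) * ∫⁻ y in Set.Ioc (0:ℝ) 1, ENNReal.ofReal (f y) :=
          lintegral_const_mul' _ _ ENNReal.ofReal_ne_top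
  · calc (∫⁻ y in Set.Ioi (1:ℝ), ENNReal.ofReal ((nmom b 0 y - 1) * a y * f y))
        ≤ ∫⁻ y in Set.Ioi (1:ℝ),
            ENNReal.ofReal (2 * b₀) * ENNReal.ofReal (a y * (1 + y ^ i) * f y) :=
          lintegral_mono_ae hbound2
      _ = ENNReal.ofReal (2 * b₀) *
            ∫⁻ y in Set.Ioi (1:ℝ), ENNReal.ofReal (a y * (1 + y ^ i) * f y) :=
          lintegral_const_mul' _ _ ENNReal.ofReal_ne_top
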